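/- arXiv:1004.1821 — 2 statements merged into one kernel-verified Lean document; each statement's English description precedes it below -/
import Mathlib

section
/- Let A be an n×N real matrix, I ⊆ {1,…,N} an index set, ω ∈ (0,1), and L ≥ 0, U ≥ 0 such that (1−L)‖x‖₂² ≤ ‖Ax‖₂² ≤ (1+U)‖x‖₂² for every x ∈ ℝ^N supported in I. Then for every u ∈ ℝ^N supported in I, ‖u − ω·(A*(Au))_I‖₂ ≤ max{ω(1+U) − 1, 1 − ω(1−L)}·‖u‖₂. -/
open Finset Matrix

noncomputable def euclNorm {α : Type*} [Fintype α] (v : α → ℝ) : ℝ :=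
  Real.sqrt (∑ i, (v i) ^ 2)

def restr {N : ℕ} (I : Finset (Fin N)) (x : Fin N → ℝ) : Fin N → ℝ :=
  fun i => if i ∈ I then x i else 0

def sparse {N : ℕ} (k : ℕ) (x : Fin N → ℝ) : Prop :=
  (Finset.univ.filter fun i => x i ≠ 0).card ≤ k

def aRIP {n N : ℕ} (A : Matrix (Fin n) (Fin N) ℝ) (m : ℕ) (L U : ℝ) : Prop :=
  ∀ x : Fin N → ℝ, sparse m x →
    (1 - L) * euclNorm x ^ 2 ≤ euclNorm (A.mulVec x) ^ 2 ∧
      euclNorm (A.mulVec x) ^ 2 ≤ (1 + U) * euclNorm x ^ 2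

def selects {N : ℕ} (T : Finset (Fin N)) (v : Fin N → ℝ) : Prop :=
  ∀ i ∈ T, ∀ j ∉ T, |v j| ≤ |v i|

def subCols {n N : ℕ} (A : Matrix (Fin n) (Fin N) ℝ) (I : Finset (Fin N)) :
    Matrix (Fin n) I ℝ :=
  fun r c => A r (c : Fin N)

noncomputable def gram {n N : ℕ} (A : Matrix (Fin n) (Fin N) ℝ) (I : Finset (Fin N)) :
    Matrix I I ℝ :=
  (subCols A I)ᵀ * subCols A I

noncomputable def pinvApply {n N : ℕ} (A : Matrix (Fin n) (Fin N) ℝ) (I : Finset (Fin N))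
    (y : Fin n → ℝ) : I → ℝ :=
  ((gram A I)⁻¹ * (subCols A I)ᵀ).mulVec y

noncomputable def pinvVec {n N : ℕ} (A : Matrix (Fin n) (Fin N) ℝ) (I : Finset (Fin N))
    (y : Fin n → ℝ) : Fin N → ℝ :=
  fun i => if h : i ∈ I then pinvApply A I y ⟨i, h⟩ else 0


def ip {α : Type*} [Fintype α] (x y : α → ℝ) : ℝ := ∑ i, x i * y i

lemma ip_self_nonneg {α : Type*} [Fintype α] (x : α → ℝ) : 0 ≤ ip x x :=
  Finset.sum_nonneg fun _ _ => mul_self_nonneg _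

lemma enorm_sq {α : Type*} [Fintype α] (x : α → ℝ) : euclNorm x ^ 2 = ip x x := by
  rw [euclNorm, Real.sq_sqrt (Finset.sum_nonneg fun i _ => sq_nonneg _)]
  simp [ip, sq]

lemma enorm_eq {α : Type*} [Fintype α] (x : α → ℝ) : euclNorm x = Real.sqrt (ip x x) := by
  rw [euclNorm]; congr 1; simp [ip, sq]

lemma adj_lemma {n N : ℕ} (A : Matrix (Fin n) (Fin N) ℝ) (I : Finset (Fin N))
    (u v : Fin N → ℝ) (hv : ∀ i ∉ I, v i = 0) :
    ip (restr I (Aᵀ.mulVec (A.mulVec u))) v = ip (A.mulVec u) (A.mulVec v) := by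
  set w := A.mulVec u with hw
  have h1 : ip (restr I (Aᵀ.mulVec w)) v = ip (Aᵀ.mulVec w) v := by
    refine Finset.sum_congr rfl fun i _ => ?_
    by_cases hi : i ∈ I
    · simp [restr, hi]
    · simp [restr, hi, hv i hi]
  rw [h1]
  simp only [ip, Matrix.mulVec, dotProduct, Matrix.transpose_apply,
    Finset.sum_mul, Finset.mul_sum]
  rw [Finset.sum_comm]
  exact Finset.sum_congr rfl fun j _ => Finset.sum_congr rfl fun i _ => by ring

theorem stmt5 {n N : ℕ} (A : Matrix (Fin n) (Fin N) ℝ) (I : Finset (Fin N))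
    (ω : ℝ) (hω0 : 0 < ω) (hω1 : ω < 1)
    (L U : ℝ) (hL : 0 ≤ L) (hU : 0 ≤ U)
    (hA : ∀ x : Fin N → ℝ, (∀ i ∉ I, x i = 0) →
      (1 - L) * euclNorm x ^ 2 ≤ euclNorm (A.mulVec x) ^ 2 ∧
        euclNorm (A.mulVec x) ^ 2 ≤ (1 + U) * euclNorm x ^ 2) :
    ∀ u : Fin N → ℝ, (∀ i ∉ I, u i = 0) →
      euclNorm (fun i => u i - ω * restr I (Aᵀ.mulVec (A.mulVec u)) i) ≤
        max (ω * (1 + U) - 1) (1 - ω * (1 - L)) * euclNorm u := by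
  intro u hu
  set c := max (ω * (1 + U) - 1) (1 - ω * (1 - L)) with hc
  have hc2 : (0:ℝ) < 1 - ω * (1 - L) := by nlinarith [mul_nonneg hω0.le hL]
  have hcpos : 0 < c := lt_of_lt_of_le hc2 (le_max_right _ _)
  -- the quadratic form bound
  have quad : ∀ x : Fin N → ℝ, (∀ i ∉ I, x i = 0) →
      |ip x x - ω * ip (A.mulVec x) (A.mulVec x)| ≤ c * ip x x := by
    intro x hx
    obtain ⟨h1, h2⟩ := hA x hx
    rw [enorm_sq, enorm_sq] at h1 h2
    have hxx := ip_self_nonneg x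
    rw [abs_le]
    constructor
    · have : ω * (1 + U) - 1 ≤ c := le_max_left _ _
      nlinarith
    · have : 1 - ω * (1 - L) ≤ c := le_max_right _ _
      nlinarith
  -- the operator T
  set Tu : Fin N → ℝ := fun i => u i - ω * restr I (Aᵀ.mulVec (A.mulVec u)) i with hTu
  have hTus : ∀ i ∉ I, Tu i = 0 := by
    intro i hi; simp [hTu, restr, hi, hu i hi]
  -- key relation : for v supported in I, ip Tu v = B u v
  have key : ∀ v : Fin N → ℝ, (∀ i ∉ I, v i = 0) →
      ip Tu v = ip u v - ω * ip (A.mulVec u) (A.mulVec v) := by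
    intro v hv
    have : ip Tu v = ip u v - ω * ip (restr I (Aᵀ.mulVec (A.mulVec u))) v := by
      simp only [ip, hTu, sub_mul, Finset.sum_sub_distrib, Finset.mul_sum, mul_assoc]
    rw [this, adj_lemma A I u v hv]
  set S := ip Tu Tu with hS
  set Q := ip u u with hQ
  have hS0 : 0 ≤ S := ip_self_nonneg Tu
  have hQ0 : 0 ≤ Q := ip_self_nonneg u
  -- y = c⁻¹ • Tu
  set y : Fin N → ℝ := fun i => c⁻¹ * Tu i with hy
  have hys : ∀ i ∉ I, y i = 0 := fun i hi => by simp [hy, hTus i hi]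
  have hipy : ip Tu y = c⁻¹ * S := by
    simp only [ip, hy, hS, Finset.mul_sum]
    exact Finset.sum_congr rfl fun i _ => by ring
  have hyy : ip y y = c⁻¹ * (c⁻¹ * S) := by
    simp only [ip, hy, hS, Finset.mul_sum]
    exact Finset.sum_congr rfl fun i _ => by ring
  -- mulVec linearity
  have mv_add : ∀ a b : Fin N → ℝ, A.mulVec (a + b) = A.mulVec a + A.mulVec b :=
    fun a b => A.mulVec_add a b
  have mv_sub : ∀ a b : Fin N → ℝ, A.mulVec (a - b) = A.mulVec a - A.mulVec b :=
    fun a b => A.mulVec_sub a b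
  -- ip expansions
  have ipe_add : ∀ {α : Type} [Fintype α] (a b : α → ℝ),
      ip (a + b) (a + b) = ip a a + 2 * ip a b + ip b b := by
    intro α _ a b
    simp only [ip, Pi.add_apply, Finset.mul_sum]
    rw [← Finset.sum_add_distrib, ← Finset.sum_add_distrib]
    exact Finset.sum_congr rfl fun i _ => by ring
  have ipe_sub : ∀ {α : Type} [Fintype α] (a b : α → ℝ),
      ip (a - b) (a - b) = ip a a - 2 * ip a b + ip b b := by
    intro α _ a b
    simp only [ip, Pi.sub_apply, Finset.mul_sum]
    rw [← Finset.sum_sub_distrib, ← Finset.sum_add_distrib]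
    exact Finset.sum_congr rfl fun i _ => by ring
  -- polarization : 4 * (ip u y - ω ip Au Ay) = B(u+y)(u+y) - B(u-y)(u-y)
  have hsupp_add : ∀ i ∉ I, (u + y) i = 0 := fun i hi => by
    simp [Pi.add_apply, hu i hi, hys i hi]
  have hsupp_sub : ∀ i ∉ I, (u - y) i = 0 := fun i hi => by
    simp [Pi.sub_apply, hu i hi, hys i hi]
  have q1 := quad (u + y) hsupp_add
  have q2 := quad (u - y) hsupp_sub
  rw [mv_add] at q1
  rw [mv_sub] at q2
  rw [ipe_add, ipe_add] at q1
  rw [ipe_sub, ipe_sub] at q2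
  have hBuy : ip u y - ω * ip (A.mulVec u) (A.mulVec y) = c⁻¹ * S := by
    rw [← key y hys, hipy]
  have habs1 := abs_le.mp q1
  have habs2 := abs_le.mp q2
  -- combine : 4 c⁻¹ S ≤ c (ip(u+y)(u+y) + ip(u-y)(u-y)) = c(2Q + 2 ip y y)
  have hcne : c ≠ 0 := hcpos.ne'
  have step1 : 4 * (ip u y - ω * ip (A.mulVec u) (A.mulVec y)) ≤
      2 * (c * ip u u) + 2 * (c * ip y y) := by
    linarith [habs1.2, habs2.1]
  rw [hBuy, hyy, ← hQ] at step1
  have hmain : S ≤ c ^ 2 * Q := by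
    have h := mul_le_mul_of_nonneg_left step1 hcpos.le
    have e1 : c * (4 * (c⁻¹ * S)) = 4 * S := by field_simp
    have e2 : c * (2 * (c * Q) + 2 * (c * (c⁻¹ * (c⁻¹ * S)))) = 2 * c ^ 2 * Q + 2 * S := by
      field_simp
    rw [e1, e2] at h
    linarith
  -- conclude
  rw [enorm_eq, enorm_eq, ← hS, ← hQ]
  calc Real.sqrt S ≤ Real.sqrt (c ^ 2 * Q) := Real.sqrt_le_sqrt hmain
    _ = c * Real.sqrt Q := by
        rw [Real.sqrt_mul (sq_nonneg c), Real.sqrt_sq hcpos.le]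
end

section
/- (One-step IHT contraction.) Let A be an n×N real matrix satisfying aRIP(2k; L₂, U₂) and aRIP(3k; L₃, U₃), and let ω ∈ (0,1). Let x ∈ ℝ^N be k-sparse, let e ∈ ℝⁿ, and set y = Ax + e. Let v ∈ ℝ^N be k-sparse, set u := v + ω·A*(y − Av), let T be an index set with |T| = k selecting k largest-magnitude entries of u, and set w := u_T. Then ‖x − w‖₂ ≤ 2√2·max{ω(1+U₃) − 1, 1 − ω(1−L₃)}·‖x − v‖₂ + 2ω√(1+U₂)·‖e‖₂. -/
open Finset Matrix

section Helpers
variable {α : Type*} [Fintype α]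

lemma euclNorm_nonneg' (v : α → ℝ) : 0 ≤ euclNorm v := Real.sqrt_nonneg _

lemma euclNorm_sq (v : α → ℝ) : euclNorm v ^ 2 = ∑ i, v i ^ 2 :=
  Real.sq_sqrt (by positivity)

lemma cs (f g : α → ℝ) : ∑ i, f i * g i ≤ euclNorm f * euclNorm g := by
  have h := Finset.sum_mul_sq_le_sq_mul_sq Finset.univ f g
  have h2 : ∑ i, f i * g i ≤ |∑ i, f i * g i| := le_abs_self _
  have h3 : |∑ i, f i * g i| = Real.sqrt ((∑ i, f i * g i) ^ 2) := by
    rw [Real.sqrt_sq_eq_abs]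
  rw [h3] at h2
  refine h2.trans ?_
  have := Real.sqrt_le_sqrt h
  refine this.trans ?_
  rw [Real.sqrt_mul (by positivity)]
  exact le_of_eq rfl

lemma euclNorm_add_le (f g : α → ℝ) :
    euclNorm (fun i => f i + g i) ≤ euclNorm f + euclNorm g := by
  have hexp : ∑ i, (f i + g i) ^ 2 = (∑ i, f i ^2) + 2 * (∑ i, f i * g i) + ∑ i, g i ^2 := by
    calc ∑ i, (f i + g i) ^ 2 = ∑ i, (f i ^2 + 2 * (f i * g i) + g i ^2) :=
          Finset.sum_congr rfl fun i _ => by ring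
      _ = (∑ i, f i ^2) + 2 * (∑ i, f i * g i) + ∑ i, g i ^2 := by
          rw [Finset.sum_add_distrib, Finset.sum_add_distrib, ← Finset.mul_sum]
  have hcs := cs f g
  have h1 : ∑ i, (f i + g i) ^ 2 ≤ (euclNorm f + euclNorm g) ^ 2 := by
    rw [hexp]
    have h2 := euclNorm_sq f; have h3 := euclNorm_sq g
    nlinarith [euclNorm_nonneg' f, euclNorm_nonneg' g]
  have := Real.sqrt_le_sqrt h1
  rw [Real.sqrt_sq (add_nonneg (euclNorm_nonneg' f) (euclNorm_nonneg' g))] at this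
  exact this

lemma euclNorm_smul (c : ℝ) (hc : 0 ≤ c) (f : α → ℝ) :
    euclNorm (fun i => c * f i) = c * euclNorm f := by
  unfold euclNorm
  rw [show ∑ i, (c * f i)^2 = c^2 * ∑ i, f i ^2 by rw [Finset.mul_sum]; exact Finset.sum_congr rfl fun i _ => by ring]
  rw [Real.sqrt_mul (by positivity), Real.sqrt_sq hc]

end Helpers

section Q
variable {n N : ℕ}

noncomputable def Qf (A : Matrix (Fin n) (Fin N) ℝ) (ω : ℝ) (a b : Fin N → ℝ) : ℝ :=
  (∑ i, a i * b i) - ω * (∑ j, A.mulVec a j * A.mulVec b j)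

lemma mulVec_add' (A : Matrix (Fin n) (Fin N) ℝ) (a b : Fin N → ℝ) (j : Fin n) :
    A.mulVec (fun i => a i + b i) j = A.mulVec a j + A.mulVec b j := by
  simp [Matrix.mulVec, dotProduct, mul_add, Finset.sum_add_distrib]

lemma mulVec_sub' (A : Matrix (Fin n) (Fin N) ℝ) (a b : Fin N → ℝ) (j : Fin n) :
    A.mulVec (fun i => a i - b i) j = A.mulVec a j - A.mulVec b j := by
  simp [Matrix.mulVec, dotProduct, mul_sub, Finset.sum_sub_distrib]

lemma mulVec_smul' (A : Matrix (Fin n) (Fin N) ℝ) (c : ℝ) (a : Fin N → ℝ) (j : Fin n) :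
    A.mulVec (fun i => c * a i) j = c * A.mulVec a j := by
  simp [Matrix.mulVec, dotProduct, Finset.mul_sum]
  exact Finset.sum_congr rfl fun i _ => by ring

lemma sum_expand_add {α : Type*} [Fintype α] (p q : α → ℝ) :
    ∑ i, (p i + q i) * (p i + q i)
      = (∑ i, p i * p i) + 2 * (∑ i, p i * q i) + ∑ i, q i * q i := by
  calc ∑ i, (p i + q i) * (p i + q i) = ∑ i, (p i * p i + 2 * (p i * q i) + q i * q i) :=
        Finset.sum_congr rfl fun i _ => by ring
    _ = _ := by rw [Finset.sum_add_distrib, Finset.sum_add_distrib, ← Finset.mul_sum]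

lemma sum_expand_sub {α : Type*} [Fintype α] (p q : α → ℝ) :
    ∑ i, (p i - q i) * (p i - q i)
      = (∑ i, p i * p i) - 2 * (∑ i, p i * q i) + ∑ i, q i * q i := by
  calc ∑ i, (p i - q i) * (p i - q i)
        = ∑ i, (p i * p i + 2 * (p i * (-q i)) + q i * q i) :=
        Finset.sum_congr rfl fun i _ => by ring
    _ = (∑ i, p i * p i) + 2 * (∑ i, p i * (-q i)) + ∑ i, q i * q i := by
        rw [Finset.sum_add_distrib, Finset.sum_add_distrib, ← Finset.mul_sum]
    _ = (∑ i, p i * p i) - 2 * (∑ i, p i * q i) + ∑ i, q i * q i := by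
        rw [show ∑ i, p i * (-q i) = -∑ i, p i * q i by
          rw [← Finset.sum_neg_distrib]; exact Finset.sum_congr rfl fun i _ => by ring]
        ring

lemma Qf_polar (A : Matrix (Fin n) (Fin N) ℝ) (ω : ℝ) (a b : Fin N → ℝ) :
    Qf A ω a b =
      (Qf A ω (fun i => a i + b i) (fun i => a i + b i)
        - Qf A ω (fun i => a i - b i) (fun i => a i - b i)) / 4 := by
  unfold Qf
  have h1 := sum_expand_add a b
  have h2 := sum_expand_sub a b
  have h3 : ∑ j, A.mulVec (fun i => a i + b i) j * A.mulVec (fun i => a i + b i) j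
      = (∑ j, A.mulVec a j * A.mulVec a j) + 2 * (∑ j, A.mulVec a j * A.mulVec b j)
        + ∑ j, A.mulVec b j * A.mulVec b j := by
    have := sum_expand_add (A.mulVec a) (A.mulVec b)
    rw [← this]
    exact Finset.sum_congr rfl fun j _ => by rw [mulVec_add']
  have h4 : ∑ j, A.mulVec (fun i => a i - b i) j * A.mulVec (fun i => a i - b i) j
      = (∑ j, A.mulVec a j * A.mulVec a j) - 2 * (∑ j, A.mulVec a j * A.mulVec b j)
        + ∑ j, A.mulVec b j * A.mulVec b j := by
    have := sum_expand_sub (A.mulVec a) (A.mulVec b)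
    rw [← this]
    exact Finset.sum_congr rfl fun j _ => by rw [mulVec_sub']
  rw [h1, h2, h3, h4]; ring

lemma Qf_smul_left (A : Matrix (Fin n) (Fin N) ℝ) (ω c : ℝ) (a b : Fin N → ℝ) :
    Qf A ω (fun i => c * a i) b = c * Qf A ω a b := by
  unfold Qf
  have h1 : ∑ i, (c * a i) * b i = c * ∑ i, a i * b i := by
    rw [Finset.mul_sum]; exact Finset.sum_congr rfl fun i _ => by ring
  have h2 : ∑ j, A.mulVec (fun i => c * a i) j * A.mulVec b j
      = c * ∑ j, A.mulVec a j * A.mulVec b j := by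
    rw [Finset.mul_sum]
    exact Finset.sum_congr rfl fun j _ => by rw [mulVec_smul']; ring
  rw [h1, h2]; ring

/-- polarization bound -/
lemma Qf_bilin_bound (A : Matrix (Fin n) (Fin N) ℝ) (ω ρ : ℝ) (hρ : 0 ≤ ρ)
    (D : Finset (Fin N))
    (hQ : ∀ s : Fin N → ℝ, (∀ i ∉ D, s i = 0) → |Qf A ω s s| ≤ ρ * ∑ i, s i ^ 2)
    (a b : Fin N → ℝ) (ha : ∀ i ∉ D, a i = 0) (hb : ∀ i ∉ D, b i = 0) :
    Qf A ω a b ≤ ρ * euclNorm a * euclNorm b := by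
  -- step 1: half-sum bound for any pair supported in D
  have key : ∀ p q : Fin N → ℝ, (∀ i ∉ D, p i = 0) → (∀ i ∉ D, q i = 0) →
      Qf A ω p q ≤ ρ * ((∑ i, p i ^2) + (∑ i, q i ^2)) / 2 := by
    intro p q hp hq
    have hpq1 : ∀ i ∉ D, p i + q i = 0 := fun i hi => by rw [hp i hi, hq i hi]; ring
    have hpq2 : ∀ i ∉ D, p i - q i = 0 := fun i hi => by rw [hp i hi, hq i hi]; ring
    have b1 := hQ _ hpq1
    have b2 := hQ _ hpq2
    have hpar : (∑ i, (p i + q i) ^2) + (∑ i, (p i - q i)^2)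
        = 2 * ((∑ i, p i ^2) + (∑ i, q i ^2)) := by
      calc (∑ i, (p i + q i) ^2) + (∑ i, (p i - q i)^2)
          = ∑ i, ((p i + q i)^2 + (p i - q i)^2) := (Finset.sum_add_distrib).symm
        _ = ∑ i, (2 * (p i ^2 + q i ^2)) := Finset.sum_congr rfl fun i _ => by ring
        _ = 2 * ∑ i, (p i ^2 + q i ^2) := (Finset.mul_sum _ _ _).symm
        _ = 2 * ((∑ i, p i ^2) + (∑ i, q i ^2)) := by rw [Finset.sum_add_distrib]
    have hpol := Qf_polar A ω p q
    have l1 : Qf A ω (fun i => p i + q i) (fun i => p i + q i) ≤ ρ * ∑ i, (p i + q i)^2 :=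
      (le_abs_self _).trans b1
    have l2 : -(ρ * ∑ i, (p i - q i)^2) ≤ Qf A ω (fun i => p i - q i) (fun i => p i - q i) := by
      have := (abs_le.mp b2).1; linarith
    nlinarith [Finset.sum_nonneg (fun i (_ : i ∈ Finset.univ) => sq_nonneg (p i + q i)),
      Finset.sum_nonneg (fun i (_ : i ∈ Finset.univ) => sq_nonneg (p i - q i))]
  -- zero cases
  by_cases hA : ∑ i, a i ^ 2 = 0
  · have haz : ∀ i, a i = 0 := by
      intro i
      have := (Finset.sum_eq_zero_iff_of_nonneg (fun i _ => sq_nonneg (a i))).mp hA i (Finset.mem_univ i)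
      exact pow_eq_zero_iff (by norm_num) |>.mp this
    have : Qf A ω a b = 0 := by
      unfold Qf
      have e1 : ∑ i, a i * b i = 0 := Finset.sum_eq_zero fun i _ => by rw [haz i]; ring
      have e2 : ∀ j, A.mulVec a j = 0 := fun j => by
        simp [Matrix.mulVec, dotProduct]
        exact Finset.sum_eq_zero fun i _ => by rw [haz i]; ring
      have e3 : ∑ j, A.mulVec a j * A.mulVec b j = 0 :=
        Finset.sum_eq_zero fun j _ => by rw [e2 j]; ring
      rw [e1, e3]; ring
    rw [this]
    exact mul_nonneg (mul_nonneg hρ (euclNorm_nonneg' _)) (euclNorm_nonneg' _)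
  · by_cases hB : ∑ i, b i ^ 2 = 0
    · have hbz : ∀ i, b i = 0 := by
        intro i
        have := (Finset.sum_eq_zero_iff_of_nonneg (fun i _ => sq_nonneg (b i))).mp hB i (Finset.mem_univ i)
        exact pow_eq_zero_iff (by norm_num) |>.mp this
      have : Qf A ω a b = 0 := by
        unfold Qf
        have e1 : ∑ i, a i * b i = 0 := Finset.sum_eq_zero fun i _ => by rw [hbz i]; ring
        have e2 : ∀ j, A.mulVec b j = 0 := fun j => by
          simp [Matrix.mulVec, dotProduct]
          exact Finset.sum_eq_zero fun i _ => by rw [hbz i]; ring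
        have e3 : ∑ j, A.mulVec a j * A.mulVec b j = 0 :=
          Finset.sum_eq_zero fun j _ => by rw [e2 j]; ring
        rw [e1, e3]; ring
      rw [this]
      exact mul_nonneg (mul_nonneg hρ (euclNorm_nonneg' _)) (euclNorm_nonneg' _)
    · have hAps : 0 < ∑ i, a i ^2 :=
        lt_of_le_of_ne (Finset.sum_nonneg fun i _ => sq_nonneg _) (Ne.symm hA)
      have hBps : 0 < ∑ i, b i ^2 :=
        lt_of_le_of_ne (Finset.sum_nonneg fun i _ => sq_nonneg _) (Ne.symm hB)
      have hna : 0 < euclNorm a := Real.sqrt_pos.mpr hAps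
      have hnb : 0 < euclNorm b := Real.sqrt_pos.mpr hBps
      set t : ℝ := euclNorm b / euclNorm a with ht
      have htpos : 0 < t := div_pos hnb hna
      have hta : ∀ i ∉ D, t * a i = 0 := fun i hi => by rw [ha i hi]; ring
      have hk := key (fun i => t * a i) b hta hb
      rw [Qf_smul_left] at hk
      have hsum_ta : ∑ i, (t * a i)^2 = t^2 * ∑ i, a i ^2 := by
        rw [Finset.mul_sum]; exact Finset.sum_congr rfl fun i _ => by ring
      rw [hsum_ta] at hk
      have hea : euclNorm a ^ 2 = ∑ i, a i ^2 := euclNorm_sq a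
      have heb : euclNorm b ^ 2 = ∑ i, b i ^2 := euclNorm_sq b
      have ht2 : t * euclNorm a = euclNorm b := by rw [ht, div_mul_cancel₀ _ hna.ne']
      -- t * Qf ≤ ρ * (t^2 * Sa + Sb)/2 = ρ * (‖b‖² + ‖b‖²)/2 = ρ ‖b‖²
      have ht2' : t^2 * (∑ i, a i ^2) = euclNorm b ^2 := by
        rw [← hea, ← ht2]; ring
      rw [ht2'] at hk
      -- hk : t * Qf a b ≤ ρ * (‖b‖² + ∑ b²)/2 = ρ * ‖b‖²
      rw [← heb] at hk
      have hk2 : t * Qf A ω a b ≤ ρ * euclNorm b ^2 := by linarith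
      have : Qf A ω a b ≤ ρ * euclNorm b ^2 / t := by
        rw [le_div_iff₀ htpos]; linarith [hk2]
      refine this.trans (le_of_eq ?_)
      rw [ht]; field_simp

end Q
section MoreHelpers
variable {N : ℕ}

lemma euclNorm_smul_abs {α : Type*} [Fintype α] (c : ℝ) (f : α → ℝ) :
    euclNorm (fun i => c * f i) = |c| * euclNorm f := by
  unfold euclNorm
  rw [show ∑ i, (c * f i)^2 = c^2 * ∑ i, f i ^2 by
    rw [Finset.mul_sum]; exact Finset.sum_congr rfl fun i _ => by ring]
  rw [Real.sqrt_mul (by positivity), Real.sqrt_sq_eq_abs]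

lemma restr_sq_sum (B : Finset (Fin N)) (f : Fin N → ℝ) :
    ∑ i, restr B f i ^ 2 = ∑ i ∈ B, f i ^ 2 := by
  calc ∑ i, restr B f i ^2 = ∑ i, (if i ∈ B then f i ^2 else 0) :=
        Finset.sum_congr rfl fun i _ => by unfold restr; split <;> simp
    _ = ∑ i ∈ B, f i ^2 := by rw [Finset.sum_ite_mem, Finset.univ_inter]

lemma restr_mul_sum (B : Finset (Fin N)) (f g : Fin N → ℝ) :
    ∑ i, restr B f i * g i = ∑ i ∈ B, f i * g i := by
  calc ∑ i, restr B f i * g i = ∑ i, (if i ∈ B then f i * g i else 0) :=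
        Finset.sum_congr rfl fun i _ => by unfold restr; split <;> simp
    _ = ∑ i ∈ B, f i * g i := by rw [Finset.sum_ite_mem, Finset.univ_inter]

lemma sparse_of_support {k : ℕ} (C : Finset (Fin N)) (f : Fin N → ℝ)
    (hC : C.card ≤ k) (h : ∀ i ∉ C, f i = 0) : sparse k f := by
  unfold sparse
  refine le_trans (Finset.card_le_card ?_) hC
  intro i hi
  simp only [Finset.mem_filter] at hi
  by_contra hiC
  exact hi.2 (h i hiC)

lemma ip_transpose {n : ℕ} (A : Matrix (Fin n) (Fin N) ℝ) (a : Fin N → ℝ) (c : Fin n → ℝ) :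
    ∑ i, a i * Aᵀ.mulVec c i = ∑ j, A.mulVec a j * c j := by
  calc ∑ i, a i * Aᵀ.mulVec c i = ∑ i, ∑ j, a i * (A j i * c j) := by
        refine Finset.sum_congr rfl fun i _ => ?_
        simp only [Matrix.mulVec, dotProduct, Matrix.transpose_apply, Finset.mul_sum]
    _ = ∑ j, ∑ i, a i * (A j i * c j) := Finset.sum_comm
    _ = ∑ j, A.mulVec a j * c j := by
        refine Finset.sum_congr rfl fun j _ => ?_
        simp only [Matrix.mulVec, dotProduct, Finset.sum_mul]
        exact Finset.sum_congr rfl fun i _ => by ring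

end MoreHelpers

set_option maxHeartbeats 1000000 in
theorem stmt16 {n N k : ℕ} (A : Matrix (Fin n) (Fin N) ℝ)
    (L₂ U₂ L₃ U₃ : ℝ)
    (hL₂0 : 0 ≤ L₂) (hU₂0 : 0 ≤ U₂) (hL₃0 : 0 ≤ L₃) (hU₃0 : 0 ≤ U₃)
    (h₂ : aRIP A (2 * k) L₂ U₂) (h₃ : aRIP A (3 * k) L₃ U₃)
    (ω : ℝ) (hω0 : 0 < ω) (hω1 : ω < 1)
    (x : Fin N → ℝ) (hx : sparse k x) (e y : Fin n → ℝ)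
    (hy : y = fun i => A.mulVec x i + e i)
    (v : Fin N → ℝ) (hv : sparse k v)
    (u : Fin N → ℝ)
    (hu : u = fun i => v i + ω * Aᵀ.mulVec (fun j => y j - A.mulVec v j) i)
    (T : Finset (Fin N)) (hTcard : T.card = k) (hTsel : selects T u)
    (w : Fin N → ℝ) (hw : w = restr T u) :
    euclNorm (fun i => x i - w i) ≤
      2 * Real.sqrt 2 * max (ω * (1 + U₃) - 1) (1 - ω * (1 - L₃))
        * euclNorm (fun i => x i - v i)
      + 2 * ω * Real.sqrt (1 + U₂) * euclNorm e := by
  classical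
  set S : Finset (Fin N) := Finset.univ.filter (fun i => x i ≠ 0) with hSdef
  set V : Finset (Fin N) := Finset.univ.filter (fun i => v i ≠ 0) with hVdef
  set B : Finset (Fin N) := S ∪ T with hBdef
  set D : Finset (Fin N) := S ∪ T ∪ V with hDdef
  have hxS : ∀ i ∉ S, x i = 0 := by
    intro i hi; by_contra hne
    exact hi (Finset.mem_filter.mpr ⟨Finset.mem_univ i, hne⟩)
  have hvV : ∀ i ∉ V, v i = 0 := by
    intro i hi; by_contra hne
    exact hi (Finset.mem_filter.mpr ⟨Finset.mem_univ i, hne⟩)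
  have hScard : S.card ≤ k := hx
  have hVcard : V.card ≤ k := hv
  have hBcard : B.card ≤ 2 * k := by
    rw [hBdef]
    have := Finset.card_union_le S T
    omega
  have hDcard : D.card ≤ 3 * k := by
    rw [hDdef]
    have h1 := Finset.card_union_le (S ∪ T) V
    have h2 := Finset.card_union_le S T
    omega
  have hBD : B ⊆ D := Finset.subset_union_left
  set ρ : ℝ := max (ω * (1 + U₃) - 1) (1 - ω * (1 - L₃)) with hρdef
  have hρ1 : ω * (1 + U₃) - 1 ≤ ρ := le_max_left _ _
  have hρ2 : 1 - ω * (1 - L₃) ≤ ρ := le_max_right _ _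
  have hρpos : 0 < ρ := lt_of_lt_of_le (by nlinarith) hρ2
  set z : Fin N → ℝ := fun i => x i - v i with hzdef
  have hzD : ∀ i ∉ D, z i = 0 := by
    intro i hi
    have hiS : i ∉ S := fun h => hi (by simp [hDdef, h])
    have hiV : i ∉ V := fun h => hi (by simp [hDdef, h])
    simp [hzdef, hxS i hiS, hvV i hiV]
  -- quadratic form bound on D-supported vectors
  have hQbound : ∀ s : Fin N → ℝ, (∀ i ∉ D, s i = 0) → |Qf A ω s s| ≤ ρ * ∑ i, s i ^ 2 := by
    intro s hs
    have hsp : sparse (3 * k) s := sparse_of_support D s hDcard hs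
    obtain ⟨hlow, hup⟩ := h₃ s hsp
    have hP : euclNorm s ^ 2 = ∑ i, s i ^ 2 := euclNorm_sq s
    have hM : euclNorm (A.mulVec s) ^ 2 = ∑ j, A.mulVec s j ^ 2 := euclNorm_sq _
    have hQeq : Qf A ω s s = (∑ i, s i ^ 2) - ω * ∑ j, A.mulVec s j ^ 2 := by
      unfold Qf
      rw [show ∑ i, s i * s i = ∑ i, s i ^2 from Finset.sum_congr rfl fun i _ => (sq (s i)).symm,
        show ∑ j, A.mulVec s j * A.mulVec s j = ∑ j, A.mulVec s j ^2 from
          Finset.sum_congr rfl fun j _ => (sq _).symm]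
    have hPnn : (0:ℝ) ≤ ∑ i, s i ^ 2 := Finset.sum_nonneg fun i _ => sq_nonneg _
    rw [abs_le, hQeq]
    constructor
    · nlinarith [mul_le_mul_of_nonneg_right hρ1 hPnn]
    · nlinarith [mul_le_mul_of_nonneg_right hρ2 hPnn]
  -- identity: x - u = Mz - ω A* e
  have hxu : ∀ i, x i - u i =
      (z i - ω * Aᵀ.mulVec (A.mulVec z) i) - ω * Aᵀ.mulVec e i := by
    intro i
    have harg : (fun j => y j - A.mulVec v j) = fun j => A.mulVec z j + e j := by
      funext j
      rw [hy]
      have := mulVec_sub' A x v j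
      simp only [hzdef]
      rw [this]; ring
    have hlin : Aᵀ.mulVec (fun j => A.mulVec z j + e j) i
        = Aᵀ.mulVec (A.mulVec z) i + Aᵀ.mulVec e i := mulVec_add' Aᵀ (A.mulVec z) e i
    rw [hu]
    simp only [harg, hlin]
    ring
  set Mz : Fin N → ℝ := fun i => z i - ω * Aᵀ.mulVec (A.mulVec z) i with hMzdef
  set a : Fin N → ℝ := restr B Mz with hadef
  set r : Fin N → ℝ := restr B (Aᵀ.mulVec e) with hrdef
  set g : Fin N → ℝ := restr B (fun i => x i - u i) with hgdef
  -- g = a - ω r pointwise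
  have hgar : ∀ i, g i = a i + (-ω) * r i := by
    intro i
    by_cases hi : i ∈ B
    · simp only [hgdef, hadef, hrdef, restr, if_pos hi, hxu i, hMzdef]; ring
    · simp only [hgdef, hadef, hrdef, restr, if_neg hi]; ring
  -- bound euclNorm a
  have haD : ∀ i ∉ D, a i = 0 := by
    intro i hi
    have : i ∉ B := fun h => hi (hBD h)
    simp [hadef, restr, this]
  have hasq : euclNorm a ^ 2 = Qf A ω a z := by
    rw [euclNorm_sq]
    have h1 : ∑ i, a i ^ 2 = ∑ i, a i * Mz i := by
      refine Finset.sum_congr rfl fun i _ => ?_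
      by_cases hi : i ∈ B
      · simp [hadef, restr, hi]; ring
      · simp [hadef, restr, hi]
    have h2 : ∑ i, a i * Mz i = (∑ i, a i * z i)
        - ω * ∑ i, a i * Aᵀ.mulVec (A.mulVec z) i := by
      rw [Finset.mul_sum, ← Finset.sum_sub_distrib]
      refine Finset.sum_congr rfl fun i _ => ?_
      simp only [hMzdef]; ring
    have h3 : ∑ i, a i * Aᵀ.mulVec (A.mulVec z) i
        = ∑ j, A.mulVec a j * A.mulVec z j := ip_transpose A a (A.mulVec z)
    rw [h1, h2, h3]; rfl
  have haQ : Qf A ω a z ≤ ρ * euclNorm a * euclNorm z :=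
    Qf_bilin_bound A ω ρ hρpos.le D hQbound a z haD hzD
  have ha_bound : euclNorm a ≤ ρ * euclNorm z := by
    have h1 : euclNorm a ^ 2 ≤ ρ * euclNorm a * euclNorm z := hasq ▸ haQ
    nlinarith [euclNorm_nonneg' a, euclNorm_nonneg' z, hρpos.le,
      mul_nonneg hρpos.le (euclNorm_nonneg' z)]
  -- bound euclNorm r
  have hr2k : sparse (2 * k) r := by
    refine sparse_of_support B r hBcard fun i hi => ?_
    simp [hrdef, restr, hi]
  have hr_bound : euclNorm r ≤ Real.sqrt (1 + U₂) * euclNorm e := by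
    have hsq : euclNorm r ^ 2 = ∑ j, A.mulVec r j * e j := by
      rw [euclNorm_sq]
      have h1 : ∑ i, r i ^ 2 = ∑ i, r i * Aᵀ.mulVec e i := by
        refine Finset.sum_congr rfl fun i _ => ?_
        by_cases hi : i ∈ B
        · simp [hrdef, restr, hi]; ring
        · simp [hrdef, restr, hi]
      rw [h1, ip_transpose A r e]
    have hcs : ∑ j, A.mulVec r j * e j ≤ euclNorm (A.mulVec r) * euclNorm e := cs _ _
    have hAr : euclNorm (A.mulVec r) ≤ Real.sqrt (1 + U₂) * euclNorm r := by
      have h := (h₂ r hr2k).2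
      have h2 := Real.sqrt_le_sqrt h
      rwa [Real.sqrt_sq (euclNorm_nonneg' _), Real.sqrt_mul (by positivity),
        Real.sqrt_sq (euclNorm_nonneg' _)] at h2
    have h4 : euclNorm r ^ 2 ≤ Real.sqrt (1 + U₂) * euclNorm r * euclNorm e := by
      rw [hsq]
      calc ∑ j, A.mulVec r j * e j ≤ euclNorm (A.mulVec r) * euclNorm e := hcs
        _ ≤ Real.sqrt (1 + U₂) * euclNorm r * euclNorm e :=
            mul_le_mul_of_nonneg_right hAr (euclNorm_nonneg' e)
    nlinarith [euclNorm_nonneg' r, euclNorm_nonneg' e, Real.sqrt_nonneg (1 + U₂),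
      mul_nonneg (Real.sqrt_nonneg (1 + U₂)) (euclNorm_nonneg' e)]
  -- combinatorial part
  set h' : Fin N → ℝ := restr (S \ T) u with hh'def
  have hdecomp : (fun i => x i - w i) = fun i => g i + h' i := by
    funext i
    rw [hw]
    by_cases hiT : i ∈ T
    · have hiB : i ∈ B := Finset.mem_union_right _ hiT
      have hiST : i ∉ S \ T := fun h => (Finset.mem_sdiff.mp h).2 hiT
      simp only [hgdef, hh'def, restr, if_pos hiT, if_pos hiB, if_neg hiST]
      ring
    · by_cases hiS : i ∈ S
      · have hiB : i ∈ B := Finset.mem_union_left _ hiS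
        have hiST : i ∈ S \ T := Finset.mem_sdiff.mpr ⟨hiS, hiT⟩
        simp only [hgdef, hh'def, restr, if_neg hiT, if_pos hiB, if_pos hiST]
        ring
      · have hiB : i ∉ B := fun h => by
          rcases Finset.mem_union.mp h with h | h
          exacts [hiS h, hiT h]
        have hiST : i ∉ S \ T := fun h => hiS (Finset.mem_sdiff.mp h).1
        simp only [hgdef, hh'def, restr, if_neg hiT, if_neg hiB, if_neg hiST]
        rw [hxS i hiS]; ring
  -- ‖h'‖ ≤ ‖g‖
  have hST : (S \ T).card ≤ (T \ S).card := by
    have h1 := Finset.card_sdiff_add_card_inter S T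
    have h2 := Finset.card_sdiff_add_card_inter T S
    rw [Finset.inter_comm] at h2
    omega
  have hsum1 : ∑ i ∈ S \ T, u i ^ 2 ≤ ∑ i ∈ T \ S, u i ^ 2 := by
    rcases (S \ T).eq_empty_or_nonempty with he | hne
    · rw [he]
      simp only [Finset.sum_empty]
      exact Finset.sum_nonneg fun i _ => sq_nonneg _
    · have hTSne : (T \ S).Nonempty :=
        Finset.card_pos.mp (lt_of_lt_of_le (Finset.card_pos.mpr hne) hST)
      set m := (T \ S).inf' hTSne (fun i => u i ^ 2) with hmdef
      have hub : ∀ j ∈ S \ T, u j ^ 2 ≤ m := by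
        intro j hj
        refine Finset.le_inf' _ _ fun i hi => ?_
        have hiT : i ∈ T := (Finset.mem_sdiff.mp hi).1
        have hjT : j ∉ T := (Finset.mem_sdiff.mp hj).2
        have habs := hTsel i hiT j hjT
        calc u j ^ 2 = |u j| ^ 2 := (sq_abs _).symm
          _ ≤ |u i| ^ 2 := pow_le_pow_left₀ (abs_nonneg _) habs 2
          _ = u i ^ 2 := sq_abs _
      have hm0 : 0 ≤ m := Finset.le_inf' hTSne _ fun i _ => sq_nonneg _
      have l1 : ∑ j ∈ S \ T, u j ^ 2 ≤ (S \ T).card • m :=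
        Finset.sum_le_card_nsmul _ _ _ hub
      have l2 : (T \ S).card • m ≤ ∑ i ∈ T \ S, u i ^ 2 :=
        Finset.card_nsmul_le_sum _ _ _ fun i hi => Finset.inf'_le _ hi
      have l3 : ((S \ T).card : ℝ) * m ≤ ((T \ S).card : ℝ) * m :=
        mul_le_mul_of_nonneg_right (Nat.cast_le.mpr hST) hm0
      rw [nsmul_eq_mul] at l1 l2
      linarith
  have hh'g : euclNorm h' ≤ euclNorm g := by
    have e1 : ∑ i, h' i ^ 2 = ∑ i ∈ S \ T, u i ^ 2 := restr_sq_sum _ _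
    have e2 : ∑ i, g i ^ 2 = ∑ i ∈ B, (x i - u i) ^ 2 := restr_sq_sum _ _
    have e3 : ∑ i ∈ T \ S, u i ^ 2 = ∑ i ∈ T \ S, (x i - u i) ^ 2 := by
      refine Finset.sum_congr rfl fun i hi => ?_
      have hiS : i ∉ S := (Finset.mem_sdiff.mp hi).2
      rw [hxS i hiS]; ring
    have e4 : ∑ i ∈ T \ S, (x i - u i) ^ 2 ≤ ∑ i ∈ B, (x i - u i) ^ 2 := by
      refine Finset.sum_le_sum_of_subset_of_nonneg ?_ fun i _ _ => sq_nonneg _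
      intro i hi
      exact Finset.mem_union_right _ (Finset.mem_sdiff.mp hi).1
    have : ∑ i, h' i ^ 2 ≤ ∑ i, g i ^ 2 := by rw [e1, e2]; linarith [hsum1, e3 ▸ e4]
    unfold euclNorm
    exact Real.sqrt_le_sqrt this
  -- assemble
  have step1 : euclNorm (fun i => x i - w i) ≤ 2 * euclNorm g := by
    rw [hdecomp]
    have := euclNorm_add_le g h'
    linarith
  have step2 : euclNorm g ≤ euclNorm a + ω * euclNorm r := by
    have : g = fun i => a i + (-ω) * r i := funext hgar
    rw [this]
    have h1 := euclNorm_add_le a (fun i => (-ω) * r i)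
    have h2 : euclNorm (fun i => (-ω) * r i) = ω * euclNorm r := by
      rw [euclNorm_smul_abs, abs_neg, abs_of_pos hω0]
    calc euclNorm (fun i => a i + (-ω) * r i) ≤ euclNorm a + euclNorm (fun i => (-ω) * r i) := h1
      _ = euclNorm a + ω * euclNorm r := by rw [h2]
  have sqrt2_ge_1 : (1:ℝ) ≤ Real.sqrt 2 := by
    rw [show (1:ℝ) = Real.sqrt 1 by rw [Real.sqrt_one]]
    exact Real.sqrt_le_sqrt (by norm_num)
  have hzn : 0 ≤ euclNorm z := euclNorm_nonneg' z
  have hen : 0 ≤ euclNorm e := euclNorm_nonneg' e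
  calc euclNorm (fun i => x i - w i) ≤ 2 * euclNorm g := step1
    _ ≤ 2 * (euclNorm a + ω * euclNorm r) := by linarith
    _ ≤ 2 * (ρ * euclNorm z + ω * (Real.sqrt (1 + U₂) * euclNorm e)) := by
        have := mul_le_mul_of_nonneg_left hr_bound hω0.le
        linarith
    _ ≤ 2 * Real.sqrt 2 * ρ * euclNorm z + 2 * ω * Real.sqrt (1 + U₂) * euclNorm e := by
        nlinarith [mul_nonneg hρpos.le hzn]
    _ = 2 * Real.sqrt 2 * ρ * euclNorm z + 2 * ω * Real.sqrt (1 + U₂) * euclNorm e := rfl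
end
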